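/- For every finite state space Ω with full-support prior μ, every f : Ω → [0,1], every pair of initial partitions Π_{A,0}, Π_{B,0}, and every ε ∈ (0,1) and δ ∈ (0,1], there exists a natural number t ≤ 3072/(δε²) such that after t messages of the discretized protocol, Alice and Bob (ε,δ)-agree: μ({ω : |E_{A,t}(ω) − E_{B,t}(ω)| > ε}) ≤ δ. In particular, O(1/(δε²)) messages of 2 bits each suffice for (ε,δ)-agreement. -/

import Mathlib

open scoped Classical BigOperators

/-- A partition of a finite type, given by the cell containing each point. -/
structure FinPartition (Ω : Type*) [Fintype Ω] [DecidableEq Ω] where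
  cell : Ω → Finset Ω
  mem_cell : ∀ ω, ω ∈ cell ω
  cell_eq : ∀ ω ω', ω' ∈ cell ω → cell ω' = cell ω

variable {Ω : Type*} [Fintype Ω] [DecidableEq Ω]

/-- Conditional expectation `E[g | S]` of `g` over `S` under the weights `μ`. -/
noncomputable def condExp (μ g : Ω → ℝ) (S : Finset Ω) : ℝ :=
  (∑ ω ∈ S, μ ω * g ω) / ∑ ω ∈ S, μ ω

/-- `E_P(ω) = E[f | P(ω)]`, the partition-conditional expectation of `f`. -/
noncomputable def expOn (μ f : Ω → ℝ) (P : FinPartition Ω) (ω : Ω) : ℝ :=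
  condExp μ f (P.cell ω)

/-- The cell `Θ_P(ω) = {ω' : E_P(ω') = E_P(ω)}` of the level-set partition of `E_P`. -/
noncomputable def levelCell (μ f : Ω → ℝ) (P : FinPartition Ω) (ω : Ω) : Finset Ω :=
  Finset.univ.filter fun ω' => expOn μ f P ω' = expOn μ f P ω

/-- `P` refines `Q`: every cell of `P` is contained in the corresponding cell of `Q`. -/
def FinPartition.Refines (P Q : FinPartition Ω) : Prop := ∀ ω, P.cell ω ⊆ Q.cell ω

/-- The squared 2-norm `‖F‖₂² = Σ_ω μ(ω) F(ω)²`. -/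
noncomputable def norm2 (μ F : Ω → ℝ) : ℝ := ∑ ω, μ ω * F ω ^ 2

/-- Refine a partition by intersecting each cell with the level sets of `g`. -/
noncomputable def FinPartition.refineBy {M : Type*} (R : FinPartition Ω) (g : Ω → M) :
    FinPartition Ω where
  cell ω := R.cell ω ∩ Finset.univ.filter fun ω' => g ω' = g ω
  mem_cell ω := by
    simp only [Finset.mem_inter, Finset.mem_filter, Finset.mem_univ, true_and]
    exact ⟨R.mem_cell ω, trivial⟩
  cell_eq := by
    intro ω ω' h
    simp only [Finset.mem_inter, Finset.mem_filter, Finset.mem_univ, true_and] at h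
    show R.cell ω' ∩ Finset.univ.filter (fun ω'' => g ω'' = g ω') =
      R.cell ω ∩ Finset.univ.filter (fun ω'' => g ω'' = g ω)
    rw [R.cell_eq ω ω' h.1, h.2]

/-- The trivial partition (Charlie's initial knowledge: nothing). -/
def trivPartition : FinPartition Ω where
  cell _ := Finset.univ
  mem_cell ω := Finset.mem_univ ω
  cell_eq _ _ _ := rfl

/-- The 2-bit message ("high" = 1, "medium" = 0, "low" = -1) that the sender with
partition `sender` sends, relative to Charlie's partition `charlie`. -/
noncomputable def discMsg (μ f : Ω → ℝ) (ε : ℝ) (sender charlie : FinPartition Ω) (ω : Ω) : ℤ :=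
  if expOn μ f charlie ω + ε / 4 < expOn μ f sender ω then 1
  else if expOn μ f sender ω < expOn μ f charlie ω - ε / 4 then -1
  else 0

/-- The discretized protocol: the triple (Alice's, Bob's, Charlie's) partitions after
`t` messages.  At odd steps Alice sends "high"/"medium"/"low" comparing her expectation
to Charlie's, refining Bob's and Charlie's partitions; at even steps Bob sends. -/
noncomputable def discTriple (μ f : Ω → ℝ) (ε : ℝ) (PA PB : FinPartition Ω) :
    ℕ → FinPartition Ω × FinPartition Ω × FinPartition Ω
  | 0 => (PA, PB, trivPartition)
  | t + 1 =>
    let p := discTriple μ f ε PA PB t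
    if (t + 1) % 2 = 1 then
      (p.1, (p.2.1).refineBy (discMsg μ f ε p.1 p.2.2), (p.2.2).refineBy (discMsg μ f ε p.1 p.2.2))
    else
      ((p.1).refineBy (discMsg μ f ε p.2.1 p.2.2), p.2.1, (p.2.2).refineBy (discMsg μ f ε p.2.1 p.2.2))

section Aux
set_option linter.unusedSectionVars false

variable {Ω : Type*} [Fintype Ω] [DecidableEq Ω]

lemma mem_cell_symm (P : FinPartition Ω) {ω ω' : Ω} (h : ω' ∈ P.cell ω) : ω ∈ P.cell ω' := by
  rw [P.cell_eq ω ω' h]; exact P.mem_cell ω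

lemma cell_nonempty (P : FinPartition Ω) (ω : Ω) : (P.cell ω).Nonempty := ⟨ω, P.mem_cell ω⟩

variable {μ f : Ω → ℝ}

lemma sum_pos_of_nonempty (hμpos : ∀ ω, 0 < μ ω) {S : Finset Ω} (hS : S.Nonempty) :
    0 < ∑ ω ∈ S, μ ω :=
  Finset.sum_pos (fun ω _ => hμpos ω) hS

lemma expOn_congr {P : FinPartition Ω} {ω ω' : Ω} (h : ω' ∈ P.cell ω) :
    expOn μ f P ω' = expOn μ f P ω := by
  unfold expOn; rw [P.cell_eq ω ω' h]

lemma condExp_le (hμpos : ∀ ω, 0 < μ ω) {S : Finset Ω} (hS : S.Nonempty) {g : Ω → ℝ} {c : ℝ}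
    (hg : ∀ ω ∈ S, g ω ≤ c) : condExp μ g S ≤ c := by
  have hpos := sum_pos_of_nonempty hμpos hS
  rw [condExp, div_le_iff₀ hpos]
  calc ∑ ω ∈ S, μ ω * g ω ≤ ∑ ω ∈ S, μ ω * c :=
        Finset.sum_le_sum fun ω hω => mul_le_mul_of_nonneg_left (hg ω hω) (hμpos ω).le
    _ = c * ∑ ω ∈ S, μ ω := by rw [← Finset.sum_mul, mul_comm]

lemma condExp_ge (hμpos : ∀ ω, 0 < μ ω) {S : Finset Ω} (hS : S.Nonempty) {g : Ω → ℝ} {c : ℝ}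
    (hg : ∀ ω ∈ S, c ≤ g ω) : c ≤ condExp μ g S := by
  have hpos := sum_pos_of_nonempty hμpos hS
  rw [condExp, le_div_iff₀ hpos]
  calc c * ∑ ω ∈ S, μ ω = ∑ ω ∈ S, μ ω * c := by rw [← Finset.sum_mul, mul_comm]
    _ ≤ ∑ ω ∈ S, μ ω * g ω :=
        Finset.sum_le_sum fun ω hω => mul_le_mul_of_nonneg_left (hg ω hω) (hμpos ω).le

lemma expOn_mem_Icc (hμpos : ∀ ω, 0 < μ ω) (hf : ∀ ω, f ω ∈ Set.Icc (0 : ℝ) 1)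
    (P : FinPartition Ω) (ω : Ω) : expOn μ f P ω ∈ Set.Icc (0 : ℝ) 1 :=
  ⟨condExp_ge hμpos (cell_nonempty P ω) (fun ω' _ => (hf ω').1),
   condExp_le hμpos (cell_nonempty P ω) (fun ω' _ => (hf ω').2)⟩

/-- Generalized tower rule over a union `S` of `P`-cells, with a `P`-measurable weight `g`. -/
lemma tower_weighted (hμpos : ∀ ω, 0 < μ ω) (P : FinPartition Ω) {S : Finset Ω}
    (hS : ∀ ω ∈ S, P.cell ω ⊆ S) (g : Ω → ℝ)
    (hg : ∀ ω ω', ω' ∈ P.cell ω → g ω' = g ω) :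
    ∑ ω ∈ S, μ ω * expOn μ f P ω * g ω = ∑ ω ∈ S, μ ω * f ω * g ω := by
  have hw : ∀ ω, 0 < ∑ ω' ∈ P.cell ω, μ ω' :=
    fun ω => sum_pos_of_nonempty hμpos (cell_nonempty P ω)
  have step : ∀ ω, μ ω * expOn μ f P ω * g ω
      = ∑ ω' ∈ P.cell ω, (μ ω * g ω / ∑ x ∈ P.cell ω, μ x) * (μ ω' * f ω') := by
    intro ω
    rw [← Finset.mul_sum]
    rw [expOn, condExp]
    field_simp
  calc ∑ ω ∈ S, μ ω * expOn μ f P ω * g ω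
      = ∑ ω ∈ S, ∑ ω' ∈ P.cell ω, (μ ω * g ω / ∑ x ∈ P.cell ω, μ x) * (μ ω' * f ω') := by
        exact Finset.sum_congr rfl fun ω _ => step ω
    _ = ∑ ω' ∈ S, ∑ ω ∈ P.cell ω', (μ ω * g ω / ∑ x ∈ P.cell ω, μ x) * (μ ω' * f ω') := by
        refine Finset.sum_comm' ?_
        intro x y
        constructor
        · rintro ⟨hx, hy⟩
          exact ⟨mem_cell_symm P hy, hS x hx hy⟩
        · rintro ⟨hx, hy⟩
          exact ⟨hS y hy hx, mem_cell_symm P hx⟩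
    _ = ∑ ω' ∈ S, μ ω' * f ω' * g ω' := by
        refine Finset.sum_congr rfl fun ω' _ => ?_
        have hcell : ∀ ω ∈ P.cell ω', P.cell ω = P.cell ω' := fun ω h => P.cell_eq ω' ω h
        have : ∑ ω ∈ P.cell ω', (μ ω * g ω / ∑ x ∈ P.cell ω, μ x) * (μ ω' * f ω')
            = ∑ ω ∈ P.cell ω', (μ ω * g ω' / ∑ x ∈ P.cell ω', μ x) * (μ ω' * f ω') := by
          refine Finset.sum_congr rfl fun ω h => ?_
          rw [hcell ω h, hg ω' ω h]
        rw [this]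
        have h2 : ∀ ω : Ω, (μ ω * g ω' / ∑ x ∈ P.cell ω', μ x) * (μ ω' * f ω')
            = μ ω * (g ω' / (∑ x ∈ P.cell ω', μ x) * (μ ω' * f ω')) := fun ω => by ring
        simp_rw [h2]
        rw [← Finset.sum_mul, ← mul_assoc, mul_div_cancel₀ (g ω') (hw ω').ne']
        ring

lemma tower (hμpos : ∀ ω, 0 < μ ω) (P : FinPartition Ω) {S : Finset Ω}
    (hS : ∀ ω ∈ S, P.cell ω ⊆ S) :
    ∑ ω ∈ S, μ ω * expOn μ f P ω = ∑ ω ∈ S, μ ω * f ω := by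
  have := tower_weighted (f := f) hμpos P hS (fun _ => (1 : ℝ)) (fun _ _ _ => rfl)
  simpa using this

lemma condExp_eq_condExp_expOn (hμpos : ∀ ω, 0 < μ ω) (P : FinPartition Ω) {S : Finset Ω}
    (hS : ∀ ω ∈ S, P.cell ω ⊆ S) :
    condExp μ f S = condExp μ (expOn μ f P) S := by
  rw [condExp, condExp, tower hμpos P hS]

end Aux
section Aux2
set_option linter.unusedSectionVars false

variable {Ω : Type*} [Fintype Ω] [DecidableEq Ω] {μ f : Ω → ℝ}

lemma union_cells_of_refines {P Q : FinPartition Ω} (h : P.Refines Q) {ω ω' : Ω}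
    (h' : ω' ∈ Q.cell ω) : P.cell ω' ⊆ Q.cell ω := by
  rw [← Q.cell_eq ω ω' h']; exact h ω'

lemma norm2_refines (hμpos : ∀ ω, 0 < μ ω) {P Q : FinPartition Ω} (h : P.Refines Q) :
    norm2 μ (expOn μ f P) = norm2 μ (expOn μ f Q)
      + ∑ ω, μ ω * (expOn μ f P ω - expOn μ f Q ω) ^ 2 := by
  set eP := expOn μ f P with heP
  set eQ := expOn μ f Q with heQ
  have hgP : ∀ ω ω', ω' ∈ P.cell ω → eQ ω' = eQ ω := fun ω ω' h' =>
    expOn_congr (h ω h')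
  have hgQ : ∀ ω ω', ω' ∈ Q.cell ω → eQ ω' = eQ ω := fun ω ω' h' => expOn_congr h'
  have hunivP : ∀ ω ∈ Finset.univ, P.cell ω ⊆ (Finset.univ : Finset Ω) :=
    fun ω _ => Finset.subset_univ _
  have hunivQ : ∀ ω ∈ Finset.univ, Q.cell ω ⊆ (Finset.univ : Finset Ω) :=
    fun ω _ => Finset.subset_univ _
  have cross1 : ∑ ω, μ ω * eP ω * eQ ω = ∑ ω, μ ω * f ω * eQ ω :=
    tower_weighted hμpos P hunivP eQ hgP
  have cross2 : ∑ ω, μ ω * eQ ω * eQ ω = ∑ ω, μ ω * f ω * eQ ω :=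
    tower_weighted hμpos Q hunivQ eQ hgQ
  have expand : ∀ ω, μ ω * (eP ω - eQ ω) ^ 2
      = μ ω * eP ω ^ 2 - (2 : ℝ) * (μ ω * eP ω * eQ ω) + μ ω * eQ ω * eQ ω := by
    intro ω; ring
  have hsum : ∑ ω, μ ω * (eP ω - eQ ω) ^ 2
      = ∑ ω, μ ω * eP ω ^ 2 - (2 : ℝ) * ∑ ω, μ ω * eP ω * eQ ω
        + ∑ ω, μ ω * eQ ω * eQ ω := by
    simp_rw [expand]
    rw [Finset.sum_add_distrib, Finset.sum_sub_distrib, Finset.mul_sum]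
  have hQsq : ∑ ω, μ ω * eQ ω * eQ ω = norm2 μ eQ := by
    rw [norm2]; refine Finset.sum_congr rfl fun ω _ => by ring
  rw [norm2, hsum, cross1, ← cross2, hQsq]
  ring

lemma norm2_expOn_nonneg (hμpos : ∀ ω, 0 < μ ω) (P : FinPartition Ω) :
    0 ≤ norm2 μ (expOn μ f P) :=
  Finset.sum_nonneg fun ω _ => mul_nonneg (hμpos ω).le (sq_nonneg _)

lemma norm2_expOn_le_one (hμpos : ∀ ω, 0 < μ ω) (hμsum : ∑ ω, μ ω = 1)
    (hf : ∀ ω, f ω ∈ Set.Icc (0 : ℝ) 1) (P : FinPartition Ω) :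
    norm2 μ (expOn μ f P) ≤ 1 := by
  rw [← hμsum, norm2]
  refine Finset.sum_le_sum fun ω _ => ?_
  have h := expOn_mem_Icc hμpos hf P ω
  calc μ ω * expOn μ f P ω ^ 2 ≤ μ ω * 1 :=
        mul_le_mul_of_nonneg_left (by nlinarith [h.1, h.2]) (hμpos ω).le
    _ = μ ω := mul_one _

lemma mem_refineBy_cell {M : Type*} (R : FinPartition Ω) (g : Ω → M) (ω x : Ω) :
    x ∈ (R.refineBy g).cell ω ↔ x ∈ R.cell ω ∧ g x = g ω := by
  simp [FinPartition.refineBy]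

lemma discMsg_cases (μ f : Ω → ℝ) (ε : ℝ) (S C : FinPartition Ω) (ω : Ω) :
    discMsg μ f ε S C ω = 1 ∨ discMsg μ f ε S C ω = -1 ∨ discMsg μ f ε S C ω = 0 := by
  unfold discMsg
  split_ifs <;> simp

lemma refineBy_refines {M : Type*} (R : FinPartition Ω) (g : Ω → M) :
    (R.refineBy g).Refines R := fun ω => Finset.inter_subset_left

lemma refines_refineBy {M : Type*} {P R : FinPartition Ω} (h : P.Refines R) {g : Ω → M}
    (hg : ∀ ω ω', ω' ∈ P.cell ω → g ω' = g ω) : P.Refines (R.refineBy g) := by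
  intro ω x hx
  rw [mem_refineBy_cell]
  exact ⟨h ω hx, hg ω x hx⟩

lemma refineBy_mono {M : Type*} {B C : FinPartition Ω} (h : B.Refines C) (g : Ω → M) :
    (B.refineBy g).Refines (C.refineBy g) := by
  intro ω x hx
  rw [mem_refineBy_cell] at hx ⊢
  exact ⟨h ω hx.1, hx.2⟩

section Msg
variable {ε : ℝ} {S C : FinPartition Ω}

lemma discMsg_congr (hSC : S.Refines C) {ω ω' : Ω} (h : ω' ∈ S.cell ω) :
    discMsg μ f ε S C ω' = discMsg μ f ε S C ω := by
  unfold discMsg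
  rw [expOn_congr h, expOn_congr (hSC ω h)]

lemma discMsg_eq_one {x : Ω} (h : discMsg μ f ε S C x = 1) :
    expOn μ f C x + ε / 4 < expOn μ f S x := by
  by_contra hc
  unfold discMsg at h
  rw [if_neg hc] at h
  split_ifs at h <;> omega

lemma discMsg_eq_neg_one {x : Ω} (h : discMsg μ f ε S C x = -1) :
    expOn μ f S x < expOn μ f C x - ε / 4 := by
  by_contra hc
  unfold discMsg at h
  split_ifs at h <;> omega

lemma discMsg_eq_zero {x : Ω} (h : discMsg μ f ε S C x = 0) :
    expOn μ f C x - ε / 4 ≤ expOn μ f S x ∧ expOn μ f S x ≤ expOn μ f C x + ε / 4 := by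
  unfold discMsg at h
  split_ifs at h with h1 h2 <;> first | omega | exact ⟨not_lt.1 h2, not_lt.1 h1⟩

/-- Pointwise move of Charlie's expectation when the message is non-medium. -/
lemma charlie_move (hμpos : ∀ ω, 0 < μ ω) (hSC : S.Refines C) (hε : 0 ≤ ε) (ω : Ω) :
    (discMsg μ f ε S C ω ≠ 0 →
      ε / 4 ≤ |expOn μ f (C.refineBy (discMsg μ f ε S C)) ω - expOn μ f C ω|) ∧
    (discMsg μ f ε S C ω = 0 →
      |expOn μ f (C.refineBy (discMsg μ f ε S C)) ω - expOn μ f C ω| ≤ ε / 4) := by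
  set msg := discMsg μ f ε S C with hmsg
  set C' := C.refineBy msg with hC'
  have hSC' : S.Refines C' := refines_refineBy hSC (fun ω ω' h => discMsg_congr hSC h)
  have hcells : ∀ x ∈ C'.cell ω, S.cell x ⊆ C'.cell ω :=
    fun x hx => union_cells_of_refines hSC' hx
  have hne : (C'.cell ω).Nonempty := cell_nonempty C' ω
  have heq : expOn μ f C' ω = condExp μ (expOn μ f S) (C'.cell ω) := by
    rw [expOn, condExp_eq_condExp_expOn hμpos S hcells]
  have hmsgx : ∀ x ∈ C'.cell ω, msg x = msg ω := by
    intro x hx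
    exact ((mem_refineBy_cell C msg ω x).1 hx).2
  have hCx : ∀ x ∈ C'.cell ω, expOn μ f C x = expOn μ f C ω :=
    fun x hx => expOn_congr (refineBy_refines C msg ω hx)
  constructor
  · intro h0
    rcases discMsg_cases μ f ε S C ω with h | h | h
    rotate_left
    rotate_left
    · exact absurd h h0
    rotate_left
    · -- msg ω = -1
      have hub : expOn μ f C' ω ≤ expOn μ f C ω - ε / 4 := by
        rw [heq]
        refine condExp_le hμpos hne fun x hx => ?_
        have := discMsg_eq_neg_one (hmsgx x hx ▸ h : msg x = -1)
        rw [hCx x hx] at this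
        linarith
      rw [abs_sub_comm, abs_of_nonneg (by linarith)]
      linarith
    · -- msg ω = 1
      have hub : expOn μ f C ω + ε / 4 ≤ expOn μ f C' ω := by
        rw [heq]
        refine condExp_ge hμpos hne fun x hx => ?_
        have := discMsg_eq_one (hmsgx x hx ▸ h : msg x = 1)
        rw [hCx x hx] at this
        linarith
      rw [abs_of_nonneg (by linarith)]
      linarith
  · intro h0
    have hlb : expOn μ f C ω - ε / 4 ≤ expOn μ f C' ω := by
      rw [heq]
      refine condExp_ge hμpos hne fun x hx => ?_
      have := discMsg_eq_zero (hmsgx x hx ▸ h0 : msg x = 0)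
      rw [hCx x hx] at this
      linarith [this.1]
    have hub : expOn μ f C' ω ≤ expOn μ f C ω + ε / 4 := by
      rw [heq]
      refine condExp_le hμpos hne fun x hx => ?_
      have := discMsg_eq_zero (hmsgx x hx ▸ h0 : msg x = 0)
      rw [hCx x hx] at this
      linarith [this.2]
    rw [abs_le]
    constructor <;> linarith

/-- Potential gain from one message. -/
lemma potential_gain (hμpos : ∀ ω, 0 < μ ω) (hSC : S.Refines C) (hε : 0 ≤ ε) :
    norm2 μ (expOn μ f C) + (ε / 4) ^ 2 *
        ∑ ω ∈ Finset.univ.filter (fun ω => discMsg μ f ε S C ω ≠ 0), μ ω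
      ≤ norm2 μ (expOn μ f (C.refineBy (discMsg μ f ε S C))) := by
  set msg := discMsg μ f ε S C with hmsg
  set C' := C.refineBy msg with hC'
  rw [norm2_refines hμpos (refineBy_refines C msg)]
  have h1 : (ε / 4) ^ 2 * ∑ ω ∈ Finset.univ.filter (fun ω => msg ω ≠ 0), μ ω
      ≤ ∑ ω, μ ω * (expOn μ f C' ω - expOn μ f C ω) ^ 2 := by
    rw [Finset.mul_sum]
    calc ∑ ω ∈ Finset.univ.filter (fun ω => msg ω ≠ 0), (ε / 4) ^ 2 * μ ω
        ≤ ∑ ω ∈ Finset.univ.filter (fun ω => msg ω ≠ 0),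
            μ ω * (expOn μ f C' ω - expOn μ f C ω) ^ 2 := by
          refine Finset.sum_le_sum fun ω hω => ?_
          rw [Finset.mem_filter] at hω
          have := (charlie_move hμpos hSC hε ω).1 hω.2
          have hsq : (ε / 4) ^ 2 ≤ (expOn μ f C' ω - expOn μ f C ω) ^ 2 := by
            rw [← sq_abs (expOn μ f C' ω - expOn μ f C ω)]
            have h4 : 0 ≤ ε / 4 := by linarith
            nlinarith
          nlinarith [(hμpos ω).le]
      _ ≤ ∑ ω, μ ω * (expOn μ f C' ω - expOn μ f C ω) ^ 2 := by
          refine Finset.sum_le_sum_of_subset_of_nonneg (Finset.filter_subset _ _) ?_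
          intro ω _ _
          exact mul_nonneg (hμpos ω).le (sq_nonneg _)
  linarith
end Msg
end Aux2
section Protocol
set_option linter.unusedSectionVars false

variable {Ω : Type*} [Fintype Ω] [DecidableEq Ω] {μ f : Ω → ℝ} {ε : ℝ}
variable {PA PB : FinPartition Ω}

lemma discTriple_odd (t : ℕ) (ht : t % 2 = 0) :
    discTriple μ f ε PA PB (t + 1) =
      ((discTriple μ f ε PA PB t).1,
       ((discTriple μ f ε PA PB t).2.1).refineBy
         (discMsg μ f ε (discTriple μ f ε PA PB t).1 (discTriple μ f ε PA PB t).2.2),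
       ((discTriple μ f ε PA PB t).2.2).refineBy
         (discMsg μ f ε (discTriple μ f ε PA PB t).1 (discTriple μ f ε PA PB t).2.2)) := by
  rw [discTriple, if_pos (by omega : (t + 1) % 2 = 1)]

lemma discTriple_even (t : ℕ) (ht : t % 2 = 1) :
    discTriple μ f ε PA PB (t + 1) =
      (((discTriple μ f ε PA PB t).1).refineBy
         (discMsg μ f ε (discTriple μ f ε PA PB t).2.1 (discTriple μ f ε PA PB t).2.2),
       (discTriple μ f ε PA PB t).2.1,
       ((discTriple μ f ε PA PB t).2.2).refineBy
         (discMsg μ f ε (discTriple μ f ε PA PB t).2.1 (discTriple μ f ε PA PB t).2.2)) := by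
  rw [discTriple, if_neg (by omega : ¬ (t + 1) % 2 = 1)]

lemma refines_inv (t : ℕ) :
    ((discTriple μ f ε PA PB t).1.Refines (discTriple μ f ε PA PB t).2.2) ∧
    ((discTriple μ f ε PA PB t).2.1.Refines (discTriple μ f ε PA PB t).2.2) := by
  induction t with
  | zero =>
    constructor <;> · intro ω; rw [discTriple]; intro x _; exact Finset.mem_univ x
  | succ t ih =>
    rcases Nat.even_or_odd t with he | ho
    · rw [discTriple_odd t (Nat.even_iff.1 he)]
      exact ⟨refines_refineBy ih.1 (fun ω ω' h => discMsg_congr ih.1 h),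
             refineBy_mono ih.2 _⟩
    · rw [discTriple_even t (Nat.odd_iff.1 ho)]
      exact ⟨refineBy_mono ih.1 _,
             refines_refineBy ih.2 (fun ω ω' h => discMsg_congr ih.2 h)⟩

/-- Two-step potential gain vs. the disagreement mass at the intermediate (odd) time. -/
lemma two_step (hμpos : ∀ ω, 0 < μ ω) (hε : 0 < ε) (t : ℕ) (ht : t % 2 = 0) :
    norm2 μ (expOn μ f (discTriple μ f ε PA PB t).2.2)
      + (ε / 4) ^ 2 * ∑ ω ∈ Finset.univ.filter (fun ω =>
          ε < |expOn μ f (discTriple μ f ε PA PB (t + 1)).1 ω -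
                expOn μ f (discTriple μ f ε PA PB (t + 1)).2.1 ω|), μ ω
      ≤ norm2 μ (expOn μ f (discTriple μ f ε PA PB (t + 2)).2.2) := by
  obtain ⟨hA, hB⟩ := refines_inv (μ := μ) (f := f) (ε := ε) (PA := PA) (PB := PB) t
  obtain ⟨hA1, hB1⟩ := refines_inv (μ := μ) (f := f) (ε := ε) (PA := PA) (PB := PB) (t + 1)
  set p := discTriple μ f ε PA PB t with hp
  set q := discTriple μ f ε PA PB (t + 1) with hq
  set r := discTriple μ f ε PA PB (t + 2) with hr
  set mA := discMsg μ f ε p.1 p.2.2 with hmA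
  set mB := discMsg μ f ε q.2.1 q.2.2 with hmB
  have h1 : q = (p.1, p.2.1.refineBy mA, p.2.2.refineBy mA) := discTriple_odd t ht
  have h2 : r = (q.1.refineBy mB, q.2.1, q.2.2.refineBy mB) :=
    discTriple_even (t + 1) (by omega)
  -- potential gains
  have g1 : norm2 μ (expOn μ f p.2.2)
      + (ε / 4) ^ 2 * ∑ ω ∈ Finset.univ.filter (fun ω => mA ω ≠ 0), μ ω
      ≤ norm2 μ (expOn μ f q.2.2) := by
    rw [h1]
    exact potential_gain hμpos hA hε.le
  have g2 : norm2 μ (expOn μ f q.2.2)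
      + (ε / 4) ^ 2 * ∑ ω ∈ Finset.univ.filter (fun ω => mB ω ≠ 0), μ ω
      ≤ norm2 μ (expOn μ f r.2.2) := by
    rw [h2]
    exact potential_gain hμpos hB1 hε.le
  -- covering
  have cover : Finset.univ.filter (fun ω =>
        ε < |expOn μ f q.1 ω - expOn μ f q.2.1 ω|)
      ⊆ Finset.univ.filter (fun ω => mA ω ≠ 0) ∪ Finset.univ.filter (fun ω => mB ω ≠ 0) := by
    intro ω hω
    rw [Finset.mem_filter] at hω
    rw [Finset.mem_union, Finset.mem_filter, Finset.mem_filter]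
    by_contra hc
    push_neg at hc
    have hmA0 : mA ω = 0 := hc.1 (Finset.mem_univ ω)
    have hmB0 : mB ω = 0 := hc.2 (Finset.mem_univ ω)
    have e1 := discMsg_eq_zero hmA0
    have e2 : |expOn μ f q.2.2 ω - expOn μ f p.2.2 ω| ≤ ε / 4 := by
      have := (charlie_move hμpos hA hε.le ω).2 hmA0
      have hq22 : q.2.2 = p.2.2.refineBy mA := by rw [h1]
      rw [hq22]
      exact this
    have e3 := discMsg_eq_zero hmB0
    have hq1 : q.1 = p.1 := by rw [h1]
    rw [hq1] at hω
    rw [abs_le] at e2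
    have := hω.2
    have habs : |expOn μ f p.1 ω - expOn μ f q.2.1 ω| ≤ 3 * (ε / 4) := by
      rw [abs_le]
      constructor <;> linarith [e1.1, e1.2, e2.1, e2.2, e3.1, e3.2]
    linarith
  -- mass bound
  have mass : ∑ ω ∈ Finset.univ.filter (fun ω =>
        ε < |expOn μ f q.1 ω - expOn μ f q.2.1 ω|), μ ω
      ≤ (∑ ω ∈ Finset.univ.filter (fun ω => mA ω ≠ 0), μ ω)
        + ∑ ω ∈ Finset.univ.filter (fun ω => mB ω ≠ 0), μ ω := by
    calc ∑ ω ∈ Finset.univ.filter (fun ω =>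
          ε < |expOn μ f q.1 ω - expOn μ f q.2.1 ω|), μ ω
        ≤ ∑ ω ∈ (Finset.univ.filter (fun ω => mA ω ≠ 0)
            ∪ Finset.univ.filter (fun ω => mB ω ≠ 0)), μ ω :=
          Finset.sum_le_sum_of_subset_of_nonneg cover (fun ω _ _ => (hμpos ω).le)
      _ ≤ _ := by
          rw [← Finset.sum_union_inter]
          have : 0 ≤ ∑ ω ∈ (Finset.univ.filter (fun ω => mA ω ≠ 0)
              ∩ Finset.univ.filter (fun ω => mB ω ≠ 0)), μ ω :=
            Finset.sum_nonneg fun ω _ => (hμpos ω).le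
          linarith
  have hc2 : (0:ℝ) ≤ (ε / 4) ^ 2 := sq_nonneg _
  nlinarith [g1, g2, mass]
end Protocol
theorem stmt_4 [Nonempty Ω] (μ : Ω → ℝ) (f : Ω → ℝ)
    (hμpos : ∀ ω, 0 < μ ω) (hμsum : ∑ ω, μ ω = 1)
    (hf : ∀ ω, f ω ∈ Set.Icc (0 : ℝ) 1)
    (PA PB : FinPartition Ω)
    (ε δ : ℝ) (hε : ε ∈ Set.Ioo (0 : ℝ) 1) (hδ : δ ∈ Set.Ioc (0 : ℝ) 1) :
    ∃ t : ℕ, (t : ℝ) ≤ 3072 / (δ * ε ^ 2) ∧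
      ∑ ω ∈ Finset.univ.filter (fun ω =>
          ε < |expOn μ f (discTriple μ f ε PA PB t).1 ω -
                expOn μ f (discTriple μ f ε PA PB t).2.1 ω|),
        μ ω ≤ δ := by
  obtain ⟨hε0, hε1⟩ := hε
  obtain ⟨hδ0, hδ1⟩ := hδ
  have hde : 0 < δ * ε ^ 2 := by positivity
  have hde1 : δ * ε ^ 2 ≤ 1 := by nlinarith
  set Φ : ℕ → ℝ := fun t => norm2 μ (expOn μ f (discTriple μ f ε PA PB t).2.2) with hΦ
  set D : ℕ → ℝ := fun t => ∑ ω ∈ Finset.univ.filter (fun ω =>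
      ε < |expOn μ f (discTriple μ f ε PA PB t).1 ω -
            expOn μ f (discTriple μ f ε PA PB t).2.1 ω|), μ ω with hD
  by_contra hcon
  push_neg at hcon
  have hcon' : ∀ t : ℕ, (t : ℝ) ≤ 3072 / (δ * ε ^ 2) → δ < D t := hcon
  set x : ℝ := 16 / (δ * ε ^ 2) with hx
  have hx0 : 0 < x := by positivity
  have hx16 : 16 ≤ x := by
    rw [hx, le_div_iff₀ hde]; nlinarith
  set N : ℕ := ⌈x⌉₊ + 1 with hN
  have hNx : x < (N : ℝ) := by
    have h := Nat.le_ceil x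
    have : ((⌈x⌉₊ : ℕ) : ℝ) + 1 = (N : ℝ) := by rw [hN]; push_cast; ring
    linarith
  have hNx2 : (N : ℝ) < x + 2 := by
    have h := Nat.ceil_lt_add_one hx0.le
    have : (N : ℝ) = ((⌈x⌉₊ : ℕ) : ℝ) + 1 := by rw [hN]; push_cast; ring
    linarith
  have hbudget : ∀ j : ℕ, j < N → ((2 * j + 1 : ℕ) : ℝ) ≤ 3072 / (δ * ε ^ 2) := by
    intro j hj
    have hjN : (j : ℝ) ≤ (N : ℝ) - 1 := by
      have : (j : ℝ) + 1 ≤ (N : ℝ) := by exact_mod_cast Nat.succ_le_of_lt hj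
      linarith
    have h192 : 3072 / (δ * ε ^ 2) = 192 * x := by rw [hx]; ring
    push_cast
    rw [h192]
    nlinarith
  have key : ∀ k : ℕ, k ≤ N → (k : ℝ) * ((ε / 4) ^ 2 * δ) ≤ Φ (2 * k) := by
    intro k
    induction k with
    | zero =>
      intro _
      simpa using norm2_expOn_nonneg (f := f) hμpos (discTriple μ f ε PA PB 0).2.2
    | succ k ih =>
      intro hk
      have h1 := ih (by omega)
      have hstep : Φ (2 * k) + (ε / 4) ^ 2 * D (2 * k + 1) ≤ Φ (2 * k + 2) :=
        two_step hμpos hε0 (2 * k) (by omega)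
      have hbad : δ < D (2 * k + 1) := hcon' _ (hbudget k (by omega))
      have h3 : (ε / 4) ^ 2 * δ ≤ (ε / 4) ^ 2 * D (2 * k + 1) :=
        mul_le_mul_of_nonneg_left hbad.le (sq_nonneg _)
      have h2k2 : 2 * (k + 1) = 2 * k + 2 := by ring
      rw [h2k2]
      push_cast
      linarith
  have hub : Φ (2 * N) ≤ 1 :=
    norm2_expOn_le_one hμpos hμsum hf (discTriple μ f ε PA PB (2 * N)).2.2
  have hkey := key N le_rfl
  have hgt : 1 < (N : ℝ) * ((ε / 4) ^ 2 * δ) := by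
    have heq : (ε / 4) ^ 2 * δ = (δ * ε ^ 2) / 16 := by ring
    rw [heq]
    have : x * ((δ * ε ^ 2) / 16) = 1 := by
      rw [hx]; field_simp
    nlinarith [mul_lt_mul_of_pos_right hNx (by positivity : (0:ℝ) < (δ * ε ^ 2) / 16)]
  linarith
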